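/- Let G be a finite connected simple graph with p vertices and q edges. For every vertex x of G, the status s(x) = Σ_y d(x,y) satisfies 2·s(x) ≤ (p − 1)(p + 2) − 2q, i.e. s(x) ≤ (p − 1)(p + 2)/2 − q. -/
import Mathlib

open Finset

private lemma aux_dist_getVert_le {V : Type*} {G : SimpleGraph V} (hG : G.Connected)
    {u v : V} (w : G.Walk u v) (i : ℕ) : G.dist u (w.getVert i) ≤ i := by
  induction w generalizing i with
  | nil => simp [SimpleGraph.Walk.getVert, SimpleGraph.dist_self]
  | @cons a b c h q ih =>
    cases i with
    | zero => simp
    | succ n =>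
      rw [SimpleGraph.Walk.getVert_cons_succ]
      calc G.dist a (q.getVert n) ≤ G.dist a b + G.dist b (q.getVert n) := hG.dist_triangle
        _ ≤ n + 1 := by
            have h1 : G.dist a b = 1 := SimpleGraph.dist_eq_one_iff_adj.2 h
            have h2 := ih n
            omega

private lemma aux_dist_getVert_right {V : Type*} {G : SimpleGraph V}
    {u v : V} (w : G.Walk u v) (i : ℕ) : G.dist (w.getVert i) v ≤ w.length - i := by
  induction w generalizing i with
  | nil => simp [SimpleGraph.Walk.getVert, SimpleGraph.dist_self]
  | @cons a b c h q ih =>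
    cases i with
    | zero =>
      simpa using SimpleGraph.dist_le (SimpleGraph.Walk.cons h q)
    | succ n =>
      rw [SimpleGraph.Walk.getVert_cons_succ, SimpleGraph.Walk.length_cons]
      have := ih n
      omega

private lemma aux_dist_getVert_eq {V : Type*} {G : SimpleGraph V} (hG : G.Connected)
    {u v : V} (w : G.Walk u v) (hlen : w.length = G.dist u v) {i : ℕ} (hi : i ≤ w.length) :
    G.dist u (w.getVert i) = i := by
  refine le_antisymm (aux_dist_getVert_le hG w i) ?_
  have h2 := aux_dist_getVert_right w i
  have h3 : G.dist u v ≤ G.dist u (w.getVert i) + G.dist (w.getVert i) v := hG.dist_triangle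
  omega

private lemma aux_arith (n : ℕ) : (n - 1) * (n + 2) = 2 * n.choose 2 + 2 * (n - 1) := by
  rcases n with _ | m
  · rfl
  · rw [Nat.choose_two_right]
    simp only [Nat.succ_sub_one]
    have hev : 2 ∣ (m + 1) * m := by
      rcases Nat.even_or_odd m with he | ho
      · exact he.two_dvd.mul_left _
      · exact (ho.add_one).two_dvd.mul_right _
    rw [Nat.mul_div_cancel' hev]
    ring

/-- For a finite connected simple graph with `p` vertices and `q` edges, the
status `s(x) = ∑ y, d(x, y)` of any vertex `x` satisfies
`2 s(x) ≤ (p - 1)(p + 2) - 2 q`. -/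
theorem status_upper_bound {V : Type*} [Fintype V] (G : SimpleGraph V)
    [DecidableRel G.Adj] (hG : G.Connected) (x : V) :
    2 * (∑ y, G.dist x y : ℤ) ≤
      ((Fintype.card V : ℤ) - 1) * ((Fintype.card V : ℤ) + 2)
        - 2 * (G.edgeFinset.card : ℤ) := by
  classical
  -- choose shortest walks from x
  have hwex : ∀ y : V, ∃ w : G.Walk x y, w.length = G.dist x y := fun y =>
    hG.exists_walk_length_eq_dist x y
  choose w hw using hwex
  have hz : ∀ y i, i ≤ G.dist x y → G.dist x ((w y).getVert i) = i := by
    intro y i hi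
    exact aux_dist_getVert_eq hG (w y) (hw y) (by rw [hw y]; exact hi)
  -- the finsets of "excess" pairs
  set T : V → Finset (Sym2 V) :=
    fun y => (Finset.range (G.dist x y - 1)).image (fun i => s(y, (w y).getVert i)) with hT
  have hmemT : ∀ y e, e ∈ T y → ∃ i, i < G.dist x y - 1 ∧ e = s(y, (w y).getVert i) := by
    intro y e he
    simp only [hT, mem_image, mem_range] at he
    obtain ⟨i, hi, rfl⟩ := he
    exact ⟨i, hi, rfl⟩
  have hzne : ∀ y i, i < G.dist x y - 1 → (w y).getVert i ≠ y := by
    intro y i hi hne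
    have h1 := hz y i (by omega)
    rw [hne] at h1
    omega
  -- T y consists of non-diagonal non-edges
  have hTsub : ∀ y, T y ⊆ (Finset.univ.filter fun e : Sym2 V => ¬ e.IsDiag) \ G.edgeFinset := by
    intro y e he
    obtain ⟨i, hi, rfl⟩ := hmemT y e he
    rw [mem_sdiff, mem_filter]
    refine ⟨⟨mem_univ _, ?_⟩, ?_⟩
    · simpa [Sym2.isDiag_iff_proj_eq] using fun hne => hzne y i hi hne.symm
    · intro hmem
      rw [SimpleGraph.mem_edgeFinset, SimpleGraph.mem_edgeSet] at hmem
      have h1 : G.dist ((w y).getVert i) y = 1 := SimpleGraph.dist_eq_one_iff_adj.2 hmem.symm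
      have h2 : G.dist x y ≤ G.dist x ((w y).getVert i) + G.dist ((w y).getVert i) y :=
        hG.dist_triangle
      have h3 := hz y i (by omega)
      omega
  have hTcard : ∀ y, (T y).card = G.dist x y - 1 := by
    intro y
    rw [hT, Finset.card_image_of_injOn, Finset.card_range]
    intro i hi j hj hij
    simp only [mem_coe, mem_range] at hi hj
    rw [Sym2.eq_iff] at hij
    rcases hij with ⟨-, hzz⟩ | ⟨hy, -⟩
    · have h1 := hz y i (by omega)
      have h2 := hz y j (by omega)
      rw [hzz] at h1; omega
    · exact absurd hy.symm (hzne y j hj)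
  have hTdisj : ∀ a ∈ (Finset.univ : Finset V), ∀ b ∈ (Finset.univ : Finset V),
      a ≠ b → Disjoint (T a) (T b) := by
    intro a _ b _ hab
    rw [Finset.disjoint_left]
    intro e hea heb
    obtain ⟨i, hi, rfl⟩ := hmemT a e hea
    obtain ⟨j, hj, hji⟩ := hmemT b _ heb
    rw [Sym2.eq_iff] at hji
    rcases hji with ⟨hba, -⟩ | ⟨hbz, hza⟩
    · exact hab hba
    · have h1 := hz a i (by omega)
      have h2 := hz b j (by omega)
      rw [hza] at h1
      rw [← hbz] at h2
      omega
  -- counting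
  have hbiU : (Finset.univ.biUnion T).card = ∑ y, (G.dist x y - 1) := by
    rw [Finset.card_biUnion hTdisj]
    exact Finset.sum_congr rfl fun y _ => hTcard y
  have hsubU : Finset.univ.biUnion T ∪ G.edgeFinset ⊆
      (Finset.univ.filter fun e : Sym2 V => ¬ e.IsDiag) := by
    intro e he
    rw [mem_union] at he
    rcases he with he | he
    · obtain ⟨y, -, hy⟩ := Finset.mem_biUnion.1 he
      exact (mem_sdiff.1 (hTsub y hy)).1
    · rw [mem_filter]
      exact ⟨mem_univ _, G.not_isDiag_of_mem_edgeSet (SimpleGraph.mem_edgeFinset.1 he)⟩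
  have hdisjE : Disjoint (Finset.univ.biUnion T) G.edgeFinset := by
    rw [Finset.disjoint_left]
    intro e he hee
    obtain ⟨y, -, hy⟩ := Finset.mem_biUnion.1 he
    exact (mem_sdiff.1 (hTsub y hy)).2 hee
  have hfiltercard : (Finset.univ.filter fun e : Sym2 V => ¬ e.IsDiag).card =
      (Fintype.card V).choose 2 := by
    rw [← Sym2.card_subtype_not_diag (α := V)]
    exact (Fintype.card_subtype _).symm
  have hmain : (∑ y, (G.dist x y - 1)) + G.edgeFinset.card ≤ (Fintype.card V).choose 2 := by
    rw [← hbiU, ← hfiltercard, ← Finset.card_union_of_disjoint hdisjE]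
    exact Finset.card_le_card hsubU
  -- relate ∑ d y to ∑ (d y - 1)
  have hpos : ∀ y : V, y ≠ x → 1 ≤ G.dist x y := by
    intro y hy
    exact hG.pos_dist_of_ne (fun h => hy h.symm)
  have hsum : (∑ y, G.dist x y) ≤ (∑ y, (G.dist x y - 1)) + (Fintype.card V - 1) := by
    have hx0 : G.dist x x = 0 := SimpleGraph.dist_self
    have hcard : (Finset.univ.erase x).card = Fintype.card V - 1 := by
      rw [Finset.card_erase_of_mem (mem_univ x), Finset.card_univ]
    calc (∑ y, G.dist x y) = ∑ y ∈ Finset.univ.erase x, G.dist x y := by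
          rw [Finset.sum_erase _ hx0]
      _ ≤ ∑ y ∈ Finset.univ.erase x, ((G.dist x y - 1) + 1) := by
          refine Finset.sum_le_sum fun y hyx => ?_
          have := hpos y (Finset.ne_of_mem_erase hyx)
          omega
      _ = (∑ y ∈ Finset.univ.erase x, (G.dist x y - 1)) + (Fintype.card V - 1) := by
          rw [Finset.sum_add_distrib, Finset.sum_const, hcard, smul_eq_mul, mul_one]
      _ ≤ (∑ y, (G.dist x y - 1)) + (Fintype.card V - 1) :=
          Nat.add_le_add_right (Finset.sum_le_sum_of_subset (Finset.erase_subset _ _)) _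
  have hfin : 2 * (∑ y, G.dist x y) + 2 * G.edgeFinset.card ≤
      (Fintype.card V - 1) * (Fintype.card V + 2) := by
    have hexp := aux_arith (Fintype.card V)
    omega
  have hp1 : 1 ≤ Fintype.card V := by
    have : Nonempty V := hG.nonempty
    exact Fintype.card_pos
  zify [hp1] at hfin
  linarith
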